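/- Let S=(S,S̄) be a bisection, u ∈ S a vertex of minimum rank, and assume no vertex of minimum rank lies in S̄. Let T be the bisection associated with a u-pair (A_u,B_u). If y is an obstruction for T, then y ∈ S. -/
import Mathlib


open Finset

/-- Number of neighbors of `x` in the set `A` (i.e. `W(x, A)`). -/
def nbrs {V : Type*} [DecidableEq V] (G : SimpleGraph V) [DecidableRel G.Adj]
    (x : V) (A : Finset V) : ℕ :=
  (A.filter (G.Adj x)).card

/-- Number of edges between the (disjoint) sets `A` and `B` (i.e. `W(A, B)`). -/
def ew {V : Type*} [DecidableEq V] (G : SimpleGraph V) [DecidableRel G.Adj]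
    (A B : Finset V) : ℕ :=
  ∑ x ∈ A, nbrs G x B

/-- Deficiency of `x` with respect to the bisection whose larger side is `S`:
`W(x,S) - W(x,S̄)` if `x ∈ S`, and `W(x,S̄) - W(x,S)` otherwise. -/
def defc {V : Type*} [Fintype V] [DecidableEq V] (G : SimpleGraph V)
    [DecidableRel G.Adj] (S : Finset V) (x : V) : ℤ :=
  if x ∈ S then (nbrs G x S : ℤ) - (nbrs G x Sᶜ : ℤ)
  else (nbrs G x Sᶜ : ℤ) - (nbrs G x S : ℤ)

/-- Potential of the bisection `(S, S̄)`:
`Φ(S,S̄) = W(S,S̄) + (1/2)(Σ_{x∈S} a_x − Σ_{y∈S̄} a_y)`. -/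
def pot {V : Type*} [Fintype V] [DecidableEq V] (G : SimpleGraph V)
    [DecidableRel G.Adj] (a : V → ℕ) (S : Finset V) : ℚ :=
  (ew G S Sᶜ : ℚ) + (∑ x ∈ S, (a x : ℚ) - ∑ y ∈ Sᶜ, (a y : ℚ)) / 2

/-- Rank of `u` with respect to the bisection `S`:
`rank_S(u) = ⌈(a_u + 1 − def_S(u)) / 2⌉`. -/
def rk {V : Type*} [Fintype V] [DecidableEq V] (G : SimpleGraph V)
    [DecidableRel G.Adj] (a : V → ℕ) (S : Finset V) (u : V) : ℤ :=
  ⌈((((a u : ℤ) + 1 - defc G S u : ℤ) : ℚ)) / 2⌉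

/-- A vertex `u` is stubborn if `a_u ≥ min {d(u), n − d(u) − 1}`. -/
def Stubborn {V : Type*} [Fintype V] [DecidableEq V] (G : SimpleGraph V)
    [DecidableRel G.Adj] (a : V → ℕ) (u : V) : Prop :=
  min (G.degree u : ℤ) ((Fintype.card V : ℤ) - (G.degree u : ℤ) - 1) ≤ (a u : ℤ)

/-- A `u`-pair `(A, B)` for the bisection `S`:
if `u ∈ S`, `A ⊆ S ∩ N̄(u)`, `B ⊆ S̄ ∩ N(u)` with `|A| = |B| = rank_S(u)`;
if `u ∈ S̄`, `A ⊆ S ∩ N(u)`, `B ⊆ S̄ ∩ N̄(u)` with `|A| = rank_S(u)` and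
`|B| = rank_S(u) − 1` (the vertex `u` itself is not moved). -/
def IsUPair {V : Type*} [Fintype V] [DecidableEq V] (G : SimpleGraph V)
    [DecidableRel G.Adj] (a : V → ℕ) (S : Finset V) (u : V)
    (A B : Finset V) : Prop :=
  if u ∈ S then
    A ⊆ S ∧ (∀ v ∈ A, ¬ G.Adj u v) ∧ u ∉ A ∧
    B ⊆ Sᶜ ∧ (∀ v ∈ B, G.Adj u v) ∧
    (A.card : ℤ) = rk G a S u ∧ (B.card : ℤ) = rk G a S u
  else
    A ⊆ S ∧ (∀ v ∈ A, G.Adj u v) ∧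
    B ⊆ Sᶜ ∧ (∀ v ∈ B, ¬ G.Adj u v) ∧ u ∉ B ∧
    (A.card : ℤ) = rk G a S u ∧ (B.card : ℤ) = rk G a S u - 1

/-- The larger side of the bisection associated with a `u`-pair `(A, B)`:
`S ∖ A ∪ B` if `u ∈ S`, and `S̄ ∖ B ∪ A` if `u ∈ S̄`. -/
def assoc {V : Type*} [Fintype V] [DecidableEq V] (S : Finset V) (u : V)
    (A B : Finset V) : Finset V :=
  if u ∈ S then (S \ A) ∪ B else (Sᶜ \ B) ∪ A


lemma nbrs_union' {V : Type*} [DecidableEq V] (G : SimpleGraph V) [DecidableRel G.Adj]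
    (x : V) {A B : Finset V} (h : Disjoint A B) :
    nbrs G x (A ∪ B) = nbrs G x A + nbrs G x B := by
  unfold nbrs
  rw [filter_union, card_union_of_disjoint (disjoint_filter_filter h)]

lemma nbrs_le_card' {V : Type*} [DecidableEq V] (G : SimpleGraph V) [DecidableRel G.Adj]
    (x : V) (A : Finset V) : nbrs G x A ≤ A.card := card_filter_le _ _

lemma nbrs_univ' {V : Type*} [Fintype V] [DecidableEq V] (G : SimpleGraph V) [DecidableRel G.Adj]
    (x : V) : nbrs G x univ = G.degree x := by
  rw [SimpleGraph.degree, SimpleGraph.neighborFinset_eq_filter, nbrs]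

/-- Lemma 6, second part: Let `u ∈ S` be a non-stubborn vertex of
minimum rank for the bisection `S`, and assume no non-stubborn vertex of minimum
rank lies in `S̄`. Let `T` be the bisection associated with a `u`-pair
`(A_u, B_u)`. If `y` is an obstruction for `T`, then `y ∈ S`. -/
theorem stmt10 {V : Type*} [Fintype V] [DecidableEq V]
    (G : SimpleGraph V) [DecidableRel G.Adj] (a : V → ℕ)
    (hodd : Odd (Fintype.card V))
    (S : Finset V) (hbis : 2 * S.card = Fintype.card V + 1)
    (u : V) (hu : u ∈ S) (hns : ¬ Stubborn G a u)
    (hminrank : ∀ v : V, ¬ Stubborn G a v → rk G a S u ≤ rk G a S v)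
    (hnotbar : ∀ v : V, v ∉ S → ¬ Stubborn G a v → rk G a S u < rk G a S v)
    (A B : Finset V) (hpair : IsUPair G a S u A B)
    (y : V) (hyT : y ∈ assoc S u A B)
    (hobs : defc G (assoc S u A B) y < -(a y : ℤ)) :
    y ∈ S := by
  by_contra hyS
  -- unpack the u-pair
  rw [IsUPair, if_pos hu] at hpair
  obtain ⟨hAS, hAnadj, huA, hBS, hBadj, hAcard, hBcard⟩ := hpair
  set T := assoc S u A B with hTdef
  have hT : T = (S \ A) ∪ B := by rw [hTdef, assoc, if_pos hu]
  have hBnS : ∀ v ∈ B, v ∉ S := fun v hv => by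
    simpa using (mem_compl.mp (hBS hv))
  -- y ∈ B
  have hyB : y ∈ B := by
    rw [hT, mem_union, mem_sdiff] at hyT
    rcases hyT with ⟨h1, _⟩ | h2
    · exact absurd h1 hyS
    · exact h2
  -- disjointness facts
  have hdAB : Disjoint A B := by
    rw [disjoint_left]; intro v hvA hvB; exact hBnS v hvB (hAS hvA)
  have hdSAB : Disjoint (S \ A) B := by
    rw [disjoint_left]; intro v hv hvB; exact hBnS v hvB (mem_sdiff.mp hv).1
  have hdSBA : Disjoint (Sᶜ \ B) A := by
    rw [disjoint_left]; intro v hv hvA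
    exact (mem_compl.mp (mem_sdiff.mp hv).1) (hAS hvA)
  have hdSA : Disjoint (S \ A) A := sdiff_disjoint
  have hdSB : Disjoint (Sᶜ \ B) B := sdiff_disjoint
  -- complement of T
  have hTc : Tᶜ = (Sᶜ \ B) ∪ A := by
    rw [hT]
    ext v
    simp only [mem_compl, mem_union, mem_sdiff]
    have h1 : v ∈ A → v ∈ S := fun h => hAS h
    have h2 : v ∈ B → v ∉ S := hBnS v
    tauto
  -- cards
  have hABcard : A.card = B.card := by
    have := hAcard.trans hBcard.symm
    exact_mod_cast this
  have hTcard : T.card = S.card := by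
    rw [hT, card_union_of_disjoint hdSAB, card_sdiff_of_subset hAS]
    have := card_le_card hAS
    omega
  have hTccard : Tᶜ.card = Fintype.card V - S.card := by
    rw [card_compl, hTcard]
  -- nbrs decompositions
  have hS_split : nbrs G y S = nbrs G y (S \ A) + nbrs G y A := by
    rw [← nbrs_union' G y hdSA, sdiff_union_of_subset hAS]
  have hSc_split : nbrs G y Sᶜ = nbrs G y (Sᶜ \ B) + nbrs G y B := by
    rw [← nbrs_union' G y hdSB, sdiff_union_of_subset hBS]
  have hTn : nbrs G y T = nbrs G y (S \ A) + nbrs G y B := by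
    rw [hT, nbrs_union' G y hdSAB]
  have hTcn : nbrs G y Tᶜ = nbrs G y (Sᶜ \ B) + nbrs G y A := by
    rw [hTc, nbrs_union' G y hdSBA]
  -- deficiency formulas
  have hdefT : defc G T y = (nbrs G y T : ℤ) - (nbrs G y Tᶜ : ℤ) := by
    rw [defc, if_pos hyT]
  have hdefS : defc G S y = (nbrs G y Sᶜ : ℤ) - (nbrs G y S : ℤ) := by
    rw [defc, if_neg hyS]
  -- degree split
  have hdeg : nbrs G y T + nbrs G y Tᶜ = G.degree y := by
    rw [← nbrs_univ' G y, ← nbrs_union' G y disjoint_compl_right, union_compl]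
  -- y is not stubborn
  have hnsy : ¬ Stubborn G a y := by
    intro hst
    rw [Stubborn] at hst
    have h1 : (nbrs G y Tᶜ : ℤ) ≤ (Tᶜ.card : ℤ) := by exact_mod_cast nbrs_le_card' G y Tᶜ
    have h2 : (Tᶜ.card : ℤ) = (Fintype.card V : ℤ) - (S.card : ℤ) := by
      rw [hTccard]
      have : S.card ≤ Fintype.card V := card_le_card (subset_univ S)
      push_cast [Nat.cast_sub this]
      ring
    have h3 : (nbrs G y T : ℤ) + (nbrs G y Tᶜ : ℤ) = (G.degree y : ℤ) := by
      exact_mod_cast hdeg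
    have hb : (2 : ℤ) * S.card = (Fintype.card V : ℤ) + 1 := by exact_mod_cast hbis
    -- defc T y ≥ -(min d (n - d - 1))
    have := hobs
    rw [hdefT] at this
    omega
  -- rank contradiction
  have hlt := hnotbar y hyS hnsy
  -- compute lower bound for defc T y
  have hAle : (nbrs G y A : ℤ) ≤ (A.card : ℤ) := by exact_mod_cast nbrs_le_card' G y A
  have hbound : -(defc G S y) - 2 * rk G a S u ≤ defc G T y := by
    rw [hdefT, hdefS, hTn, hTcn, hS_split, hSc_split, ← hAcard]
    push_cast
    have : (0:ℤ) ≤ (nbrs G y B : ℤ) := by positivity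
    omega
  have hkey : (a y : ℤ) + 1 - defc G S y ≤ 2 * rk G a S u := by
    have := lt_of_le_of_lt hbound hobs
    omega
  have hry : rk G a S y ≤ rk G a S u := by
    rw [rk]
    have h2 : (((a y : ℤ) + 1 - defc G S y : ℤ) : ℚ) / 2 ≤ ((2 * rk G a S u : ℤ) : ℚ) / 2 := by
      apply div_le_div_of_nonneg_right _ (by norm_num)
      exact_mod_cast hkey
    calc ⌈(((a y : ℤ) + 1 - defc G S y : ℤ) : ℚ) / 2⌉ ≤ ⌈((2 * rk G a S u : ℤ) : ℚ) / 2⌉ :=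
          Int.ceil_le_ceil h2
      _ = rk G a S u := by
          push_cast
          rw [mul_comm, mul_div_assoc]
          norm_num
  omega
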